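/- Let A be a connected reduced order with universal grading (Γ, (A_γ)_{γ∈Γ}) and degree map d: μ(A) → Γ. Then the following are equivalent: (i) A is stark; (ii) the only group homomorphism f: Γ → μ(A) with f∘d∘f = f is the zero homomorphism; (iii) for every group homomorphism f: Γ → μ(A), the endomorphism d∘f of Γ is nilpotent. -/

import Mathlib

/-- A commutative ring is connected if it is non-zero and `0`, `1` are its only idempotents. -/
def IsConnectedRing (R : Type*) [CommRing R] : Prop :=
  Nontrivial R ∧ ∀ e : R, IsIdempotentElem e → e = 0 ∨ e = 1

/-- A commutative ring is stark if it is not isomorphic to any group ring `A[G]`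
with `A` a ring and `G` a non-trivial group. -/
def IsStark (R : Type u) [CommRing R] : Prop :=
  ∀ (A : Type u) (_ : Ring A) (G : Type u) (_ : Group G),
    Nontrivial G → IsEmpty (R ≃+* MonoidAlgebra A G)

/-- A grading of a commutative ring `R` by a (multiplicatively written) abelian group `Δ`:
a `Δ`-indexed internal direct sum decomposition of `R` into additive subgroups such that
`R_γ · R_δ ⊆ R_{γδ}`. -/
structure Grading (R : Type u) [CommRing R] (Δ : Type v) [CommGroup Δ] where
  comp : Δ → AddSubgroup R
  mul_mem : ∀ ⦃γ δ : Δ⦄ ⦃x y : R⦄, x ∈ comp γ → y ∈ comp δ → x * y ∈ comp (γ * δ)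
  isInternal : letI := Classical.decEq Δ; DirectSum.IsInternal comp

/-- A grading is universal if every grading of `R` is obtained from it by pushforward
(`S_ε = Σ_{δ ∈ f⁻¹(ε)} R_δ`) along a unique group homomorphism. -/
def Grading.IsUniversal {R : Type u} [CommRing R] {Δ : Type v} [CommGroup Δ]
    (g : Grading R Δ) : Prop :=
  ∀ (E : Type v) (_ : CommGroup E) (s : Grading R E),
    ∃! f : Δ →* E, ∀ ε : E, s.comp ε = ⨆ δ ∈ f ⁻¹' {ε}, g.comp δ

universe u v

namespace StarkAux

open DirectSum

variable {A : Type u} [CommRing A] {Δ : Type v} [CommGroup Δ] (g : Grading A Δ)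

noncomputable def D : A ≃+ ⨁ δ, g.comp δ :=
  letI := Classical.decEq Δ
  (AddEquiv.ofBijective (DirectSum.coeAddMonoidHom g.comp) g.isInternal).symm

lemma coe_D_symm (w : ⨁ δ, g.comp δ) :
    letI := Classical.decEq Δ
    (D g).symm w = DirectSum.coeAddMonoidHom g.comp w := rfl

noncomputable def P (δ : Δ) : A →+ A :=
  letI := Classical.decEq Δ
  (AddSubgroupClass.subtype (g.comp δ)).comp
    ((DFinsupp.evalAddMonoidHom δ).comp (D g).toAddMonoidHom)

lemma P_apply (δ : Δ) (a : A) : P g δ a = ((D g a) δ : A) := rfl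

lemma mem_comp_P (δ : Δ) (a : A) : P g δ a ∈ g.comp δ := (D g a δ).2

lemma D_apply_mem (h : a ∈ g.comp δ) :
    letI := Classical.decEq Δ
    D g a = DirectSum.of (fun δ => g.comp δ) δ ⟨a, h⟩ := by
  letI := Classical.decEq Δ
  apply (D g).symm.injective
  rw [AddEquiv.symm_apply_apply, coe_D_symm, DirectSum.coeAddMonoidHom_of]

lemma P_apply_of_mem {a : A} {δ : Δ} (h : a ∈ g.comp δ) : P g δ a = a := by
  letI := Classical.decEq Δ
  rw [P_apply, D_apply_mem g h, DirectSum.of_eq_same]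

lemma P_apply_of_ne {a : A} {δ γ : Δ} (h : a ∈ g.comp δ) (hne : δ ≠ γ) : P g γ a = 0 := by
  letI := Classical.decEq Δ
  rw [P_apply, D_apply_mem g h, DirectSum.of_eq_of_ne _ _ _ hne.symm, ZeroMemClass.coe_zero]

lemma sum_P (a : A) :
    letI := Classical.decEq Δ
    letI : ∀ (i : Δ) (x : g.comp i), Decidable (x ≠ 0) := fun _ _ => Classical.dec _
    ∑ δ ∈ (D g a).support, P g δ a = a := by
  letI := Classical.decEq Δ
  letI : ∀ (i : Δ) (x : g.comp i), Decidable (x ≠ 0) := fun _ _ => Classical.dec _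
  calc ∑ δ ∈ (D g a).support, P g δ a
      = ∑ δ ∈ (D g a).support,
          DirectSum.coeAddMonoidHom g.comp (DirectSum.of (fun δ => g.comp δ) δ (D g a δ)) := by
        refine Finset.sum_congr rfl fun δ _ => ?_
        rw [DirectSum.coeAddMonoidHom_of]; rfl
    _ = DirectSum.coeAddMonoidHom g.comp
          (∑ δ ∈ (D g a).support, DirectSum.of (fun δ => g.comp δ) δ (D g a δ)) :=
        (map_sum _ _ _).symm
    _ = a := by rw [DirectSum.sum_support_of, ← coe_D_symm, (D g).symm_apply_apply]

lemma eq_zero_of_forall_P (a : A) (h : ∀ δ, P g δ a = 0) : a = 0 := by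
  letI := Classical.decEq Δ
  have h0 : D g a = 0 := by
    apply DFinsupp.ext
    intro δ
    exact Subtype.ext (by simpa [P_apply] using h δ)
  have := (D g).injective (h0.trans (map_zero (D g)).symm)
  simpa using this


lemma mem_biSup_iff {s : Set Δ} {a : A} :
    a ∈ (⨆ δ ∈ s, g.comp δ) ↔ ∀ δ ∉ s, P g δ a = 0 := by
  constructor
  · intro ha
    let T : AddSubgroup A :=
      { carrier := {a : A | ∀ δ ∉ s, P g δ a = 0}
        zero_mem' := fun δ _ => map_zero (P g δ)
        add_mem' := fun hx hy δ hδ => by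
          rw [Set.mem_setOf_eq] at hx hy
          rw [map_add, hx δ hδ, hy δ hδ, add_zero]
        neg_mem' := fun hx δ hδ => by
          rw [Set.mem_setOf_eq] at hx
          rw [map_neg, hx δ hδ, neg_zero] }
    have hle : (⨆ δ ∈ s, g.comp δ) ≤ T := by
      refine iSup_le fun δ => iSup_le fun hδ x hx γ hγ => ?_
      exact P_apply_of_ne g hx (fun e => hγ (e ▸ hδ))
    exact hle ha
  · intro h
    letI := Classical.decEq Δ
    letI : ∀ (i : Δ) (x : g.comp i), Decidable (x ≠ 0) := fun _ _ => Classical.dec _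
    rw [← sum_P g a]
    refine AddSubgroup.sum_mem _ fun δ hδ => ?_
    have hδs : δ ∈ s := by
      by_contra hc
      have h0 := h δ hc
      have hne := DFinsupp.mem_support_iff.mp hδ
      exact hne (Subtype.ext (by simpa [P_apply] using h0))
    exact (le_iSup₂ (f := fun δ (_ : δ ∈ s) => g.comp δ) δ hδs) (mem_comp_P g δ a)

lemma P_mul_left {x : A} {δ : Δ} (hx : x ∈ g.comp δ) (a : A) (γ : Δ) :
    P g γ (x * a) = x * P g (δ⁻¹ * γ) a := by
  letI := Classical.decEq Δ
  letI : ∀ (i : Δ) (x : g.comp i), Decidable (x ≠ 0) := fun _ _ => Classical.dec _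
  conv_lhs => rw [← sum_P g a, Finset.mul_sum, map_sum]
  rw [Finset.sum_eq_single (δ⁻¹ * γ)]
  · have hmem : x * P g (δ⁻¹ * γ) a ∈ g.comp γ := by
      have := g.mul_mem hx (mem_comp_P g (δ⁻¹ * γ) a)
      rwa [mul_inv_cancel_left] at this
    exact P_apply_of_mem g hmem
  · intro b _ hb
    refine P_apply_of_ne g (g.mul_mem hx (mem_comp_P g b a)) ?_
    intro e
    exact hb (by rw [← e]; group)
  · intro hns
    have : P g (δ⁻¹ * γ) a = 0 := by
      by_contra hc
      exact hns (DFinsupp.mem_support_iff.mpr (fun h0 => hc (by rw [P_apply, h0]; rfl)))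
    rw [this, mul_zero, map_zero]

lemma one_mem_comp_one : (1 : A) ∈ g.comp 1 := by
  have hhom : ∀ (δ : Δ) (x : A), x ∈ g.comp δ → x * P g 1 1 = x := by
    intro δ x hx
    have h1 := P_mul_left g hx 1 δ
    rw [mul_one, P_apply_of_mem g hx, inv_mul_cancel] at h1
    exact h1.symm
  have key : ∀ a : A, a * P g 1 1 = a := by
    intro a
    letI := Classical.decEq Δ
    letI : ∀ (i : Δ) (x : g.comp i), Decidable (x ≠ 0) := fun _ _ => Classical.dec _
    conv_lhs => rw [← sum_P g a, Finset.sum_mul]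
    conv_rhs => rw [← sum_P g a]
    exact Finset.sum_congr rfl fun δ _ => hhom δ _ (mem_comp_P g δ a)
  have h1 := key 1
  rw [one_mul] at h1
  rw [← h1]
  exact mem_comp_P g 1 1

lemma finite_support_comp [Module.Finite ℤ A] [Module.Free ℤ A] :
    {δ : Δ | g.comp δ ≠ ⊥}.Finite := by
  rw [← Set.not_infinite]
  intro hinf
  haveI : Infinite {δ : Δ | g.comp δ ≠ ⊥} := hinf.to_subtype
  have hex : ∀ δ : {δ : Δ | g.comp δ ≠ ⊥}, ∃ x : A, x ∈ g.comp δ.1 ∧ x ≠ 0 := by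
    rintro ⟨δ, hδ⟩
    simp only [Set.mem_setOf_eq] at hδ
    by_contra hc
    push_neg at hc
    exact hδ (AddSubgroup.eq_bot_iff_forall _ |>.mpr (fun x hx => by
      by_contra h0; exact h0 (hc x hx ▸ rfl) ))
  choose v hv hv0 using hex
  have hli : LinearIndependent ℤ v := by
    rw [linearIndependent_iff']
    intro t c hsum i hi
    have happ := congrArg (P g i.1) hsum
    rw [map_sum, map_zero] at happ
    rw [Finset.sum_eq_single i] at happ
    · rw [map_zsmul, P_apply_of_mem g (hv i)] at happ
      exact (smul_eq_zero.mp happ).resolve_right (hv0 i)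
    · intro j _ hj
      have hz : P g i.1 (v j) = 0 :=
        P_apply_of_ne g (hv j) (fun e => hj (Subtype.ext e))
      rw [map_zsmul, hz, smul_zero]
    · intro h; exact absurd hi h
  haveI := hli.finite_of_isNoetherian
  exact not_finite {δ : Δ | g.comp δ ≠ ⊥}


lemma mul_mem_biSup {E : Type*} [CommGroup E] (f : Δ →* E) {x y : A} {ε₁ ε₂ : E}
    (hx : x ∈ ⨆ δ ∈ f ⁻¹' {ε₁}, g.comp δ) (hy : y ∈ ⨆ δ ∈ f ⁻¹' {ε₂}, g.comp δ) :
    x * y ∈ ⨆ δ ∈ f ⁻¹' {ε₁ * ε₂}, g.comp δ := by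
  rw [mem_biSup_iff] at hx hy ⊢
  intro γ hγ
  letI := Classical.decEq Δ
  letI : ∀ (i : Δ) (x : g.comp i), Decidable (x ≠ 0) := fun _ _ => Classical.dec _
  conv_lhs => rw [← sum_P g x, Finset.sum_mul, map_sum]
  refine Finset.sum_eq_zero fun δ hδ => ?_
  rw [P_mul_left g (mem_comp_P g δ x)]
  have hfδ : f δ = ε₁ := by
    by_contra hc
    exact (DFinsupp.mem_support_iff.mp hδ)
      (Subtype.ext (by simpa [P_apply] using hx δ (by simpa using hc)))
  have hz : P g (δ⁻¹ * γ) y = 0 := by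
    refine hy _ ?_
    simp only [Set.mem_preimage, Set.mem_singleton_iff, map_mul, map_inv, hfδ]
    intro e
    apply hγ
    simp only [Set.mem_preimage, Set.mem_singleton_iff]
    rw [← e, mul_inv_cancel_left]
  rw [hz, mul_zero]


lemma not_isStark {A : Type u} [CommRing A] [Nontrivial A]
    {Γ : Type u} [CommGroup Γ] (gr : Grading A Γ)
    (d : CommGroup.torsion Aˣ →* Γ)
    (hd : ∀ ζ : CommGroup.torsion Aˣ, ((ζ : Aˣ) : A) ∈ gr.comp (d ζ))
    (f : Γ →* CommGroup.torsion Aˣ) (hf : ∀ γ, f (d (f γ)) = f γ) (hne : f ≠ 1) :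
    ¬ IsStark A := by
  intro hS
  obtain ⟨γ₀, hγ₀⟩ : ∃ γ, f γ ≠ 1 := by
    by_contra hc; push_neg at hc; exact hne (MonoidHom.ext fun γ => hc γ)
  have hone : (1:A) ∈ ⨆ δ ∈ f ⁻¹' {(1 : CommGroup.torsion Aˣ)}, gr.comp δ :=
    (le_iSup₂ (f := fun δ (_ : δ ∈ f ⁻¹' {(1 : CommGroup.torsion Aˣ)}) => gr.comp δ)
      (1:Γ) (by simp)) (one_mem_comp_one gr)
  let B : Subring A :=
    { carrier := ((⨆ δ ∈ f ⁻¹' {(1 : CommGroup.torsion Aˣ)}, gr.comp δ : AddSubgroup A) : Set A)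
      zero_mem' := zero_mem _
      add_mem' := fun hx hy => add_mem hx hy
      neg_mem' := fun hx => neg_mem hx
      one_mem' := hone
      mul_mem' := fun {x y} hx hy => by
        have := mul_mem_biSup gr f (ε₁ := 1) (ε₂ := 1) hx hy
        simpa using this }
  have memB_iff : ∀ x : A,
      x ∈ B ↔ x ∈ (⨆ δ ∈ f ⁻¹' {(1 : CommGroup.torsion Aˣ)}, gr.comp δ : AddSubgroup A) :=
    fun x => Iff.rfl
  let G : Subgroup (CommGroup.torsion Aˣ) := f.range
  haveI : Nontrivial G := by
    refine ⟨⟨⟨f γ₀, ⟨γ₀, rfl⟩⟩, 1, fun h => hγ₀ ?_⟩⟩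
    simpa using congrArg Subtype.val h
  let mg : G →* A := (Units.coeHom A).comp ((CommGroup.torsion Aˣ).subtype.comp G.subtype)
  have mg_unit : ∀ h : G, IsUnit (mg h) := fun h => (((h : CommGroup.torsion Aˣ)) : Aˣ).isUnit
  have hfd : ∀ h : G, f (d (h : CommGroup.torsion Aˣ)) = (h : CommGroup.torsion Aˣ) := by
    rintro ⟨ζ, γ, rfl⟩
    exact hf γ
  let LL := (MonoidAlgebra.lift B A G) mg
  have hmg_mem : ∀ h : G, mg h ∈ ⨆ δ ∈ f ⁻¹' {(h : CommGroup.torsion Aˣ)}, gr.comp δ := by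
    intro h
    refine (le_iSup₂ (f := fun δ (_ : δ ∈ f ⁻¹' {(h : CommGroup.torsion Aˣ)}) => gr.comp δ)
      (d (h : CommGroup.torsion Aˣ)) ?_) (hd (h : CommGroup.torsion Aˣ))
    simp [hfd h]
  have hinj : Function.Injective LL := by
    rw [injective_iff_map_eq_zero]
    intro x hx0
    classical
    have hrep : LL x = ∑ h ∈ x.coeff.support, (x.coeff h : A) * mg h := by
      rw [MonoidAlgebra.lift_apply]
      exact Finset.sum_congr rfl fun h _ => Subring.smul_def _ _
    set y : G → A := fun h => (x.coeff h : A) * mg h with hy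
    have hymem : ∀ h : G, y h ∈ ⨆ δ ∈ f ⁻¹' {(h : CommGroup.torsion Aˣ)}, gr.comp δ := by
      intro h
      have h1 : (x.coeff h : A) ∈ ⨆ δ ∈ f ⁻¹' {(1 : CommGroup.torsion Aˣ)}, gr.comp δ := (x.coeff h).2
      have := mul_mem_biSup gr f h1 (hmg_mem h)
      simpa using this
    have hsum : ∑ h ∈ x.coeff.support, y h = 0 := by rw [← hrep]; exact hx0
    have hyzero : ∀ h₀ ∈ x.coeff.support, y h₀ = 0 := by
      intro h₀ hh₀
      apply eq_zero_of_forall_P gr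
      intro γ
      by_cases hcase : f γ = (h₀ : CommGroup.torsion Aˣ)
      · have hPsum := congrArg (P gr γ) hsum
        rw [map_sum, map_zero] at hPsum
        rw [Finset.sum_eq_single h₀] at hPsum
        · exact hPsum
        · intro h _ hne'
          refine (mem_biSup_iff gr).mp (hymem h) γ ?_
          intro e
          rw [Set.mem_preimage, Set.mem_singleton_iff] at e
          exact hne' (Subtype.ext (e.symm.trans hcase))
        · intro h; exact absurd hh₀ h
      · exact (mem_biSup_iff gr).mp (hymem h₀) γ (by simpa using hcase)
    have hxz : ∀ h : G, x.coeff h = 0 := by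
      intro h
      by_cases hh : h ∈ x.coeff.support
      · have := hyzero h hh
        rw [hy] at this
        have hxh : (x.coeff h : A) = 0 := ((mg_unit h).mul_left_eq_zero).mp this
        exact Subtype.ext hxh
      · exact Finsupp.notMem_support_iff.mp hh
    exact MonoidAlgebra.ext (Finsupp.ext hxz)
  have hsurj : Function.Surjective LL := by
    have hmem : ∀ (δ : Γ) (x : A), x ∈ gr.comp δ → ∃ m, LL m = x := by
      intro δ x hx
      have hBmem : x * ((((f δ)⁻¹ : CommGroup.torsion Aˣ) : Aˣ) : A) ∈
          (⨆ δ' ∈ f ⁻¹' {(1 : CommGroup.torsion Aˣ)}, gr.comp δ' : AddSubgroup A) := by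
        have h2 := gr.mul_mem hx (hd (f δ)⁻¹)
        refine (le_iSup₂ (f := fun δ' (_ : δ' ∈ f ⁻¹' {(1 : CommGroup.torsion Aˣ)}) => gr.comp δ')
          (δ * d (f δ)⁻¹) ?_) h2
        simp only [Set.mem_preimage, Set.mem_singleton_iff, map_mul, map_inv, hf δ]
        exact mul_inv_cancel _
      refine ⟨MonoidAlgebra.single ⟨f δ, ⟨δ, rfl⟩⟩ ⟨_, hBmem⟩, ?_⟩
      rw [MonoidAlgebra.lift_single, Subring.smul_def]
      exact Units.inv_mul_cancel_right x _
    intro a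
    letI := Classical.decEq Γ
    letI : ∀ (i : Γ) (x : gr.comp i), Decidable (x ≠ 0) := fun _ _ => Classical.dec _
    let Rng : AddSubgroup A := AddMonoidHom.range (LL.toLinearMap.toAddMonoidHom)
    have ha : a ∈ Rng := by
      rw [← sum_P gr a]
      refine AddSubgroup.sum_mem _ fun δ _ => ?_
      obtain ⟨m, hm⟩ := hmem δ _ (mem_comp_P gr δ a)
      exact ⟨m, hm⟩
    exact ha
  exact (hS B inferInstance G inferInstance inferInstance).false
    ((RingEquiv.ofBijective LL ⟨hinj, hsurj⟩).symm)

lemma exists_fixed_of_not_isStark {A : Type u} [CommRing A] [Nontrivial A]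
    [Module.Free ℤ A] [Module.Finite ℤ A]
    {Γ : Type u} [CommGroup Γ] (gr : Grading A Γ) (hgr : gr.IsUniversal)
    (d : CommGroup.torsion Aˣ →* Γ)
    (hd : ∀ ζ : CommGroup.torsion Aˣ, ((ζ : Aˣ) : A) ∈ gr.comp (d ζ))
    (hns : ¬ IsStark A) :
    ∃ (f : Γ →* CommGroup.torsion Aˣ) (γ₀ : Γ), γ₀ ≠ 1 ∧ d (f γ₀) = γ₀ := by
  rw [IsStark] at hns
  push_neg at hns
  obtain ⟨B₀, instB, G₀, instG, hGnt, hiso⟩ := hns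
  obtain ⟨e⟩ := hiso
  haveI : Nontrivial (MonoidAlgebra B₀ G₀) := e.symm.toEquiv.nontrivial
  haveI : Nontrivial B₀ := by
    by_contra h
    rw [not_nontrivial_iff_subsingleton] at h
    exact (not_subsingleton (MonoidAlgebra B₀ G₀)) inferInstance
  have hcomm : ∀ x y : MonoidAlgebra B₀ G₀, x * y = y * x := by
    intro x y
    have h1 := congrArg e (mul_comm (e.symm x) (e.symm y))
    simpa [map_mul] using h1
  letI instCG : CommGroup G₀ :=
    { instG with
      mul_comm := by
        intro g h
        have h1 : (MonoidAlgebra.single g (1:B₀) * MonoidAlgebra.single h (1:B₀)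
            : MonoidAlgebra B₀ G₀) = MonoidAlgebra.single h 1 * MonoidAlgebra.single g 1 :=
          hcomm _ _
        rw [MonoidAlgebra.single_mul_single, MonoidAlgebra.single_mul_single, one_mul] at h1
        rcases MonoidAlgebra.single_inj.mp h1 with ⟨h2, _⟩ | ⟨h2, _⟩
        · exact h2
        · exact absurd h2 one_ne_zero }
  let scomp : G₀ → AddSubgroup A := fun g =>
    { carrier := {a : A | ∀ h : G₀, h ≠ g → (e a).coeff h = 0}
      zero_mem' := fun h _ => by rw [map_zero]; rfl
      add_mem' := fun hx hy h hh => by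
        rw [map_add, MonoidAlgebra.coeff_add, Finsupp.add_apply, hx h hh, hy h hh, add_zero]
      neg_mem' := fun hx h hh => by
        rw [map_neg, MonoidAlgebra.coeff_neg, Finsupp.neg_apply, hx h hh, neg_zero] }
  have mem_scomp : ∀ (a : A) (g : G₀), a ∈ scomp g ↔ ∀ h : G₀, h ≠ g → (e a).coeff h = 0 :=
    fun a g => Iff.rfl
  have hsingle_mem : ∀ (g : G₀) (b : B₀), e.symm (MonoidAlgebra.single g b) ∈ scomp g := by
    intro g b h hh
    rw [RingEquiv.apply_symm_apply, MonoidAlgebra.coeff_single, Finsupp.single_eq_of_ne' (Ne.symm hh)]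
  have smul_mem : ∀ ⦃γ δ : G₀⦄ ⦃x y : A⦄, x ∈ scomp γ → y ∈ scomp δ → x*y ∈ scomp (γ*δ) := by
    intro γ δ x y hx hy
    have hex : e x = MonoidAlgebra.single γ ((e x).coeff γ) := MonoidAlgebra.ext <| Finsupp.ext fun h => by
      by_cases hh : h = γ
      · subst hh; rw [MonoidAlgebra.coeff_single, Finsupp.single_eq_same]
      · rw [hx h hh, MonoidAlgebra.coeff_single, Finsupp.single_eq_of_ne' (Ne.symm hh)]
    have hey : e y = MonoidAlgebra.single δ ((e y).coeff δ) := MonoidAlgebra.ext <| Finsupp.ext fun h => by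
      by_cases hh : h = δ
      · subst hh; rw [MonoidAlgebra.coeff_single, Finsupp.single_eq_same]
      · rw [hy h hh, MonoidAlgebra.coeff_single, Finsupp.single_eq_of_ne' (Ne.symm hh)]
    intro h hh
    rw [map_mul, hex, hey, MonoidAlgebra.single_mul_single, MonoidAlgebra.coeff_single,
      Finsupp.single_eq_of_ne' (Ne.symm hh)]
  have sint : (letI := Classical.decEq G₀; DirectSum.IsInternal scomp) := by
    letI := Classical.decEq G₀
    letI : ∀ (i : G₀) (x : scomp i), Decidable (x ≠ 0) := fun _ _ => Classical.dec _
    constructor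
    · rw [injective_iff_map_eq_zero]
      intro w hw
      have hrep : DirectSum.coeAddMonoidHom scomp w = ∑ g ∈ w.support, ((w g : A)) := by
        conv_lhs => rw [← DirectSum.sum_support_of (x := w), map_sum]
        exact Finset.sum_congr rfl fun g _ => DirectSum.coeAddMonoidHom_of _ _ _
      have hsum : ∑ g ∈ w.support, ((w g : A)) = 0 := by rw [← hrep]; exact hw
      apply DFinsupp.ext; intro g
      by_cases hg : g ∈ w.support
      · have h3 : ∑ g' ∈ w.support, (e ((w g' : A))).coeff g = 0 := by
          calc ∑ g' ∈ w.support, (e ((w g' : A))).coeff g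
              = (e (∑ g' ∈ w.support, ((w g' : A)))).coeff g := by
                rw [map_sum, MonoidAlgebra.coeff_sum]; exact (Finsupp.finset_sum_apply _ _ _).symm
            _ = 0 := by rw [hsum, map_zero]; rfl
        rw [Finset.sum_eq_single g] at h3
        · have hzero : e ((w g : A)) = 0 := MonoidAlgebra.ext <| Finsupp.ext fun h => by
            by_cases hh : h = g
            · subst hh; exact h3
            · exact (w g).2 h hh
          have : ((w g : A)) = 0 := by
            have := congrArg e.symm hzero
            rwa [RingEquiv.symm_apply_apply, map_zero] at this
          exact Subtype.ext this
        · intro g' _ hg'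
          exact (w g').2 g (Ne.symm hg')
        · intro h; exact absurd hg h
      · exact DFinsupp.notMem_support_iff.mp hg
    · intro a
      have hterm : ∀ h ∈ (e a).coeff.support,
          DirectSum.coeAddMonoidHom scomp
            (DirectSum.of (fun g => ↥(scomp g)) h ⟨_, hsingle_mem h ((e a).coeff h)⟩)
          = e.symm (MonoidAlgebra.single h ((e a).coeff h)) :=
        fun h _ => DirectSum.coeAddMonoidHom_of _ _ _
      refine ⟨∑ h ∈ (e a).coeff.support,
        DirectSum.of (fun g => ↥(scomp g)) h ⟨_, hsingle_mem h ((e a).coeff h)⟩, ?_⟩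
      rw [map_sum, Finset.sum_congr rfl hterm, ← map_sum]
      have : ∑ h ∈ (e a).coeff.support, MonoidAlgebra.single h ((e a).coeff h) = e a :=
        MonoidAlgebra.sum_coeff_single (e a)
      rw [this, RingEquiv.symm_apply_apply]
  let s : Grading A G₀ := ⟨scomp, smul_mem, sint⟩
  obtain ⟨φ, hφ, -⟩ := hgr G₀ instCG s
  have hu : ∀ g : G₀, (e.symm (MonoidAlgebra.single g (1:B₀)))
      * (e.symm (MonoidAlgebra.single g⁻¹ (1:B₀))) = 1 := by
    intro g
    rw [← map_mul, MonoidAlgebra.single_mul_single, one_mul, mul_inv_cancel,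
      ← MonoidAlgebra.one_def, map_one]
  let ug : G₀ → Aˣ := fun g =>
    ⟨e.symm (MonoidAlgebra.single g 1), e.symm (MonoidAlgebra.single g⁻¹ 1),
      hu g, by rw [mul_comm]; exact hu g⟩
  let ψ0 : G₀ →* Aˣ := MonoidHom.mk' ug (by
    intro g h
    apply Units.ext
    show e.symm (MonoidAlgebra.single (g*h) 1)
      = e.symm (MonoidAlgebra.single g 1) * e.symm (MonoidAlgebra.single h 1)
    rw [← map_mul, MonoidAlgebra.single_mul_single, one_mul])
  haveI : Finite G₀ := by
    have hfin := finite_support_comp (g := s)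
    have huniv : ∀ g : G₀, s.comp g ≠ ⊥ := by
      intro g hbot
      have hm : e.symm (MonoidAlgebra.single g (1:B₀)) ∈ s.comp g := hsingle_mem g 1
      rw [hbot, AddSubgroup.mem_bot] at hm
      have h5 := congrArg e hm
      rw [RingEquiv.apply_symm_apply, map_zero] at h5
      exact one_ne_zero (MonoidAlgebra.single_eq_zero.mp h5)
    have hueq : {g : G₀ | s.comp g ≠ ⊥} = Set.univ := Set.eq_univ_of_forall huniv
    rw [hueq, Set.finite_univ_iff] at hfin
    exact hfin
  have htor : ∀ g : G₀, ψ0 g ∈ CommGroup.torsion Aˣ := fun g =>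
    MonoidHom.isOfFinOrder ψ0 (isOfFinOrder_of_finite g)
  let ψ : G₀ →* (CommGroup.torsion Aˣ) := ψ0.codRestrict _ htor
  have hψcoe : ∀ g : G₀, (((ψ g : Aˣ)) : A) = e.symm (MonoidAlgebra.single g 1) :=
    fun g => rfl
  have hK : ∀ g : G₀, φ (d (ψ g)) = g := by
    intro g
    have ha1 : ((ψ g : Aˣ) : A) ∈ gr.comp (d (ψ g)) := hd (ψ g)
    have ha2 : ((ψ g : Aˣ) : A) ∈ s.comp (φ (d (ψ g))) := by
      rw [hφ (φ (d (ψ g)))]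
      exact (le_iSup₂ (f := fun δ (_ : δ ∈ φ ⁻¹' {φ (d (ψ g))}) => gr.comp δ)
        (d (ψ g)) rfl) ha1
    by_contra hne'
    have h0 := ha2 g (fun h' => hne' h'.symm)
    rw [hψcoe, RingEquiv.apply_symm_apply, MonoidAlgebra.coeff_single, Finsupp.single_eq_same] at h0
    exact one_ne_zero h0
  obtain ⟨g₀, hg₀⟩ := exists_ne (1 : G₀)
  refine ⟨ψ.comp φ, d (ψ g₀), ?_, ?_⟩
  · intro h1
    have h2 := hK g₀
    rw [h1, map_one] at h2
    exact hg₀ h2.symm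
  · show d (ψ (φ (d (ψ g₀)))) = d (ψ g₀)
    rw [hK g₀]

lemma two_to_three {A : Type u} [CommRing A] [Nontrivial A]
    [Module.Free ℤ A] [Module.Finite ℤ A]
    {Γ : Type u} [CommGroup Γ] (gr : Grading A Γ)
    (d : CommGroup.torsion Aˣ →* Γ)
    (hd : ∀ ζ : CommGroup.torsion Aˣ, ((ζ : Aˣ) : A) ∈ gr.comp (d ζ))
    (h2 : ∀ f : Γ →* CommGroup.torsion Aˣ, (∀ γ, f (d (f γ)) = f γ) → f = 1)
    (f : Γ →* CommGroup.torsion Aˣ) :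
    ∃ n : ℕ, 0 < n ∧ ∀ γ : Γ, (fun x : Γ => d (f x))^[n] γ = 1 := by
  set T : Γ → Γ := fun x => d (f x) with hT
  have hrange : Set.range T ⊆ {γ | gr.comp γ ≠ ⊥} := by
    rintro _ ⟨γ, rfl⟩ hbot
    have hm := hd (f γ)
    rw [hT] at hbot
    rw [hbot, AddSubgroup.mem_bot] at hm
    exact Units.ne_zero _ hm
  have hfin : (Set.range T).Finite := (finite_support_comp gr).subset hrange
  haveI : Finite ↥(Set.range T) := hfin.to_subtype
  let τ : ↥(Set.range T) → ↥(Set.range T) := fun x => ⟨T x.1, Set.mem_range_self _⟩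
  have hit : ∀ (k : ℕ) (x : ↥(Set.range T)), ((τ^[k] x) : Γ) = T^[k] x.1 := by
    intro k
    induction k with
    | zero => intro x; rfl
    | succ k ih =>
      intro x
      rw [Function.iterate_succ_apply, Function.iterate_succ_apply]
      exact ih (τ x)
  obtain ⟨m, n, hmn, heq⟩ : ∃ m n : ℕ, m ≠ n ∧ τ^[m] = τ^[n] :=
    Finite.exists_ne_map_eq_of_infinite (fun k : ℕ => τ^[k])
  have key : ∀ {m n : ℕ}, m < n → τ^[m] = τ^[n] →
      ∃ N r : ℕ, 0 < r ∧ ∀ γ, T^[N + r] γ = T^[N] γ := by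
    intro m n hlt he
    refine ⟨m + 1, n - m, by omega, fun γ => ?_⟩
    have h1 : m + 1 + (n - m) = n + 1 := by omega
    rw [h1]
    have h2' : ∀ j : ℕ, T^[j+1] γ = (τ^[j] ⟨T γ, Set.mem_range_self _⟩ : Γ) := by
      intro j
      rw [hit j ⟨T γ, Set.mem_range_self _⟩, Function.iterate_succ_apply]
    rw [h2' n, h2' m, he]
  have key2 : ∃ N r : ℕ, 0 < r ∧ ∀ γ, T^[N + r] γ = T^[N] γ := by
    rcases hmn.lt_or_gt with h | h
    · exact key h heq
    · exact key h heq.symm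
  obtain ⟨N, r, hr, hNr⟩ := key2
  have hstep : ∀ a, N ≤ a → ∀ γ, T^[a + r] γ = T^[a] γ := by
    intro a ha γ
    obtain ⟨j, rfl⟩ : ∃ j, a = j + N := ⟨a - N, by omega⟩
    have h1 : j + N + r = j + (N + r) := by omega
    rw [h1, Function.iterate_add_apply]
    conv_rhs => rw [Function.iterate_add_apply]
    rw [hNr]
  have hmult : ∀ (j : ℕ) (a : ℕ), N ≤ a → ∀ γ, T^[a + j * r] γ = T^[a] γ := by
    intro j
    induction j with
    | zero => intro a _ γ; simp
    | succ j ih =>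
      intro a ha γ
      have h1 : a + (j+1) * r = (a + j * r) + r := by ring
      rw [h1, hstep _ (by omega) γ, ih a ha γ]
  set k := (N + 1) * r - 1 with hk
  have hge : (N + 1) * r ≥ N + 1 := by
    calc (N + 1) * r ≥ (N + 1) * 1 := Nat.mul_le_mul_left _ hr
      _ = N + 1 := by omega
  have hkN : N ≤ k := by omega
  have hk1 : k + 1 = (N + 1) * r := by omega
  have h2k : ∀ γ, T^[2*k+1] γ = T^[k] γ := by
    intro γ
    have h1 : 2*k+1 = k + (N+1) * r := by omega
    rw [h1, hmult (N+1) k hkN γ]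
  let Thom : Monoid.End Γ := (d.comp f : Γ →* Γ)
  have hpow : ∀ (j : ℕ) (γ : Γ), ((Thom ^ j : Monoid.End Γ) γ) = T^[j] γ := by
    intro j
    induction j with
    | zero => intro γ; rfl
    | succ j ih =>
      intro γ
      rw [pow_succ]
      show (Thom ^ j) (Thom γ) = _
      rw [Function.iterate_succ_apply]
      exact ih (T γ)
  let f' : Γ →* CommGroup.torsion Aˣ := f.comp (Thom ^ k : Monoid.End Γ)
  have hf' : ∀ γ, f' (d (f' γ)) = f' γ := by
    intro γ
    show f ((Thom^k) (d (f ((Thom^k) γ)))) = f ((Thom^k) γ)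
    rw [hpow, hpow]
    have hTT : d (f (T^[k] γ)) = T^[k+1] γ := (Function.iterate_succ_apply' T k γ).symm
    rw [hTT, ← Function.iterate_add_apply]
    have h1 : k + (k + 1) = 2*k+1 := by omega
    rw [h1, h2k γ]
  have hf'one := h2 f' hf'
  refine ⟨k + 1, Nat.succ_pos _, fun γ => ?_⟩
  have hval : f (T^[k] γ) = 1 := by
    have h1 : f' γ = 1 := by rw [hf'one]; rfl
    rwa [show f' γ = f (T^[k] γ) from by show f ((Thom^k) γ) = _; rw [hpow]] at h1
  show T^[k+1] γ = 1
  rw [Function.iterate_succ_apply']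
  show d (f (T^[k] γ)) = 1
  rw [hval, map_one]

end StarkAux

/-- Let `A` be a connected reduced order with universal grading
`(Γ, (A_γ))` and degree map `d : μ(A) → Γ`. The following are equivalent: (i) `A` is stark;
(ii) the only `f ∈ Hom(Γ, μ(A))` with `f∘d∘f = f` is the trivial homomorphism;
(iii) for every `f ∈ Hom(Γ, μ(A))` the endomorphism `d∘f` of `Γ` is nilpotent. -/
theorem stark_tfae
    {A : Type u} [CommRing A] [Module.Free ℤ A] [Module.Finite ℤ A] [IsReduced A]
    (hconn : IsConnectedRing A)
    {Γ : Type u} [CommGroup Γ] (gr : Grading A Γ) (hgr : gr.IsUniversal)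
    (d : CommGroup.torsion Aˣ →* Γ)
    (hd : ∀ ζ : CommGroup.torsion Aˣ, ((ζ : Aˣ) : A) ∈ gr.comp (d ζ)) :
    List.TFAE
      [IsStark A,
       ∀ f : Γ →* CommGroup.torsion Aˣ, (∀ γ, f (d (f γ)) = f γ) → f = 1,
       ∀ f : Γ →* CommGroup.torsion Aˣ, ∃ n : ℕ, 0 < n ∧
         ∀ γ : Γ, (fun x : Γ => d (f x))^[n] γ = 1] := by
  haveI : Nontrivial A := hconn.1
  tfae_have 1 → 2 := by
    intro h1 f hf
    by_contra hne
    exact StarkAux.not_isStark gr d hd f hf hne h1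
  tfae_have 2 → 3 := by
    intro h2 f
    exact StarkAux.two_to_three gr d hd h2 f
  tfae_have 3 → 1 := by
    intro h3
    by_contra hns
    obtain ⟨f, γ₀, hγ₀, hfix⟩ := StarkAux.exists_fixed_of_not_isStark gr hgr d hd hns
    obtain ⟨n, hn, hiter⟩ := h3 f
    have hfi : ∀ m : ℕ, (fun x : Γ => d (f x))^[m] γ₀ = γ₀ := by
      intro m
      induction m with
      | zero => rfl
      | succ m ih =>
        rw [Function.iterate_succ_apply', ih]
        exact hfix
    exact hγ₀ ((hfi n).symm.trans (hiter γ₀))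
  tfae_finish
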